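/- Covering lemma: Let Ω ⊂ ℝ² be a smooth bounded domain, K ∈ ℕ, ε > 0, and let f ∈ L¹(Ω) be a.e. nonnegative with ∫_Ω f = 1. Suppose that for every choice of points x_{11},…,x_{1l} ∈ Ω and x_{21},…,x_{2m} ∈ ∂Ω with 2l + m ≤ K one has ∫_{∪_{i,k} B_ε(x_{ik})} f < 1 − ε. Then there exist ε̃, r̃ > 0 depending only on ε and Ω, and points x̃_{11},…,x̃_{1l̃} (with d(x̃_{1k}, ∂Ω) ≥ r̃) and x̃_{21},…,x̃_{2m̃}, such that 2l̃ + m̃ ≥ K+1, the points are pairwise at distance ≥ 4r̃, and ∫_{B_{r̃}(x̃_{ik})} f ≥ ε̃ for every i,k. -/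

import Mathlib

open MeasureTheory Metric

private lemma integral_union_le' {f : EuclideanSpace ℝ (Fin 2) → ℝ}
    {A B : Set (EuclideanSpace ℝ (Fin 2))}
    (hA : MeasurableSet A) (hB : MeasurableSet B)
    (hiA : IntegrableOn f A volume) (hiB : IntegrableOn f B volume)
    (h0B : ∀ x ∈ B, 0 ≤ f x) :
    ∫ x in A ∪ B, f x ≤ (∫ x in A, f x) + ∫ x in B, f x := by
  have hAB : A ∪ B = A ∪ (B \ A) := by rw [Set.union_diff_self]
  rw [hAB, setIntegral_union Set.disjoint_sdiff_right (hB.diff hA)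
    hiA (hiB.mono_set Set.diff_subset)]
  have : ∫ x in B \ A, f x ≤ ∫ x in B, f x :=
    setIntegral_mono_set hiB (ae_restrict_of_forall_mem hB h0B)
      ((Set.diff_subset : B \ A ⊆ B).eventuallyLE)
  exact add_le_add_right this _

private lemma integral_biUnion_le' {f : EuclideanSpace ℝ (Fin 2) → ℝ}
    {Ω : Set (EuclideanSpace ℝ (Fin 2))} (hΩ : MeasurableSet Ω)
    (hint : IntegrableOn f Ω volume) (hf0 : ∀ x ∈ Ω, 0 ≤ f x)
    (s : Finset (EuclideanSpace ℝ (Fin 2))) (r : ℝ) :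
    ∫ y in Ω ∩ ⋃ z ∈ s, ball z r, f y ≤ ∑ z ∈ s, ∫ y in Ω ∩ ball z r, f y := by
  classical
  induction s using Finset.induction_on with
  | empty => simp
  | insert a s hnot ih =>
    rw [Finset.set_biUnion_insert, Set.inter_union_distrib_left, Finset.sum_insert hnot]
    have hUmeas : MeasurableSet (⋃ z ∈ (s : Finset _), ball z r) :=
      MeasurableSet.biUnion s.countable_toSet fun z _ => measurableSet_ball
    have h1 : ∫ y in Ω ∩ ball a r ∪ Ω ∩ ⋃ z ∈ (s : Finset _), ball z r, f y ≤
        (∫ y in Ω ∩ ball a r, f y) + ∫ y in Ω ∩ ⋃ z ∈ (s : Finset _), ball z r, f y :=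
      integral_union_le' (hΩ.inter measurableSet_ball) (hΩ.inter hUmeas)
        (hint.mono_set Set.inter_subset_left) (hint.mono_set Set.inter_subset_left)
        (fun x hx => hf0 x hx.1)
    linarith [ih]

/-- Covering lemma: if a probability density `f` on `Ω` is not `(1−ε)`-concentrated on any
union of `ε`-balls centered at `l` interior points and `m` boundary points with `2l+m ≤ K`,
then there are `ε̃, r̃ > 0` (depending only on `ε` and `Ω`) and at least `K+1` (counting
interior points twice) `4r̃`-separated points, each of whose `r̃`-balls carries mass `≥ ε̃`. -/
theorem covering_lemma
    (Ω : Set (EuclideanSpace ℝ (Fin 2))) (hΩopen : IsOpen Ω)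
    (hΩbdd : Bornology.IsBounded Ω) (K : ℕ) (ε : ℝ) (hε : 0 < ε) :
    ∃ εt > (0 : ℝ), ∃ rt > (0 : ℝ),
      ∀ f : EuclideanSpace ℝ (Fin 2) → ℝ,
        IntegrableOn f Ω volume → (∀ y ∈ Ω, 0 ≤ f y) → (∫ y in Ω, f y) = 1 →
        (∀ (l m : ℕ), 2 * l + m ≤ K →
          ∀ y1 : Fin l → EuclideanSpace ℝ (Fin 2), (∀ k, y1 k ∈ Ω) →
          ∀ y2 : Fin m → EuclideanSpace ℝ (Fin 2), (∀ k, y2 k ∈ frontier Ω) →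
            ∫ y in Ω ∩ ((⋃ k, ball (y1 k) ε) ∪ ⋃ k, ball (y2 k) ε), f y < 1 - ε) →
        ∃ (lt mt : ℕ) (x1 : Fin lt → EuclideanSpace ℝ (Fin 2))
          (x2 : Fin mt → EuclideanSpace ℝ (Fin 2)),
          K + 1 ≤ 2 * lt + mt ∧
          (∀ k, x1 k ∈ Ω ∧ rt ≤ infDist (x1 k) (frontier Ω)) ∧
          (∀ k, x2 k ∈ closure Ω) ∧
          (∀ k k', k ≠ k' → 4 * rt ≤ dist (x1 k) (x1 k')) ∧
          (∀ k k', k ≠ k' → 4 * rt ≤ dist (x2 k) (x2 k')) ∧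
          (∀ k k', 4 * rt ≤ dist (x1 k) (x2 k')) ∧
          (∀ k, εt ≤ ∫ y in Ω ∩ ball (x1 k) rt, f y) ∧
          (∀ k, εt ≤ ∫ y in Ω ∩ ball (x2 k) rt, f y) := by
  classical
  set r : ℝ := ε / 6 with hr
  have hrpos : 0 < r := by positivity
  have hcomp : IsCompact (closure Ω) := hΩbdd.isCompact_closure
  obtain ⟨T0, hT0sub, hT0fin, hT0cov⟩ := hcomp.finite_cover_balls hrpos
  set T : Finset (EuclideanSpace ℝ (Fin 2)) := hT0fin.toFinset with hT
  have hTsub : ∀ z ∈ T, z ∈ closure Ω := fun z hz => hT0sub (hT0fin.mem_toFinset.mp hz)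
  have hTcov : closure Ω ⊆ ⋃ z ∈ T, ball z r := by
    intro x hx
    obtain ⟨z, hz, hb⟩ := Set.mem_iUnion₂.mp (hT0cov hx)
    exact Set.mem_iUnion₂.mpr ⟨z, hT0fin.mem_toFinset.mpr hz, hb⟩
  set N : ℕ := T.card with hN
  set εt : ℝ := ε / (2 * (N + 1)) with hεt
  have hεtpos : 0 < εt := by positivity
  refine ⟨εt, hεtpos, r, hrpos, ?_⟩
  intro f hint hf0 hf1 h
  -- Ω and its frontier are nonempty
  have hΩne : Ω.Nonempty := by
    by_contra hne
    rw [Set.not_nonempty_iff_eq_empty] at hne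
    rw [hne] at hf1
    simp at hf1
  have hfrne : (frontier Ω).Nonempty := by
    by_contra hfe
    rw [Set.not_nonempty_iff_eq_empty] at hfe
    rcases isClopen_iff.mp (isClopen_iff_frontier_eq_empty.mpr hfe) with h1 | h1
    · exact hΩne.ne_empty h1
    · rw [h1] at hΩbdd
      have : IsCompact (Set.univ : Set (EuclideanSpace ℝ (Fin 2))) := by
        simpa using hΩbdd.isCompact_closure
      exact noncompact_univ _ this
  -- heavy centers
  set H : Finset (EuclideanSpace ℝ (Fin 2)) :=
    T.filter (fun z => εt ≤ ∫ y in Ω ∩ ball z r, f y) with hH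
  -- maximal 4r-separated subset of H
  set Sep : Finset (EuclideanSpace ℝ (Fin 2)) → Prop :=
    fun s => ∀ x ∈ s, ∀ y ∈ s, x ≠ y → 4 * r ≤ dist x y with hSep
  obtain ⟨M, hMmem, hMmax⟩ := Finset.exists_maximal (s := H.powerset.filter Sep)
    ⟨∅, Finset.mem_filter.mpr ⟨Finset.mem_powerset.mpr (Finset.empty_subset _),
      fun x hx => absurd hx (Finset.notMem_empty x)⟩⟩
  have hMsub : M ⊆ H := Finset.mem_powerset.mp (Finset.mem_filter.mp hMmem).1
  have hMsep : Sep M := (Finset.mem_filter.mp hMmem).2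
  have hMnear : ∀ z ∈ H, ∃ s ∈ M, dist z s < 4 * r := by
    intro z hz
    by_contra hc
    push_neg at hc
    have hzM : z ∉ M := by
      intro hzM
      have := hc z hzM
      simp only [dist_self] at this
      linarith
    have hmem : insert z M ∈ H.powerset.filter Sep := by
      refine Finset.mem_filter.mpr ⟨Finset.mem_powerset.mpr (Finset.insert_subset hz hMsub), ?_⟩
      intro x hx y hy hxy
      rcases Finset.mem_insert.mp hx with heq1 | hx
      · rcases Finset.mem_insert.mp hy with heq2 | hy
        · exact absurd (heq1.trans heq2.symm) hxy
        · rw [heq1]; exact hc y hy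
      · rcases Finset.mem_insert.mp hy with heq2 | hy
        · rw [heq2, dist_comm]; exact hc x hx
        · exact hMsep x hx y hy hxy
    exact (lt_irrefl M) ((Finset.ssubset_insert hzM).trans_le (hMmax hmem (Finset.ssubset_insert hzM).le))
  have hMheavy : ∀ z ∈ M, εt ≤ ∫ y in Ω ∩ ball z r, f y :=
    fun z hz => (Finset.mem_filter.mp (hMsub hz)).2
  have hMcl : ∀ z ∈ M, z ∈ closure Ω :=
    fun z hz => hTsub z (Finset.filter_subset _ _ (hMsub hz))
  set P : EuclideanSpace ℝ (Fin 2) → Prop :=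
    fun s => s ∈ Ω ∧ r ≤ infDist s (frontier Ω) with hP
  set M1 : Finset (EuclideanSpace ℝ (Fin 2)) := M.filter P with hM1
  set M2 : Finset (EuclideanSpace ℝ (Fin 2)) := M.filter (fun s => ¬ P s) with hM2
  have hM1M : M1 ⊆ M := Finset.filter_subset _ _
  have hM2M : M2 ⊆ M := Finset.filter_subset _ _
  have hmove : ∀ z ∈ M2, ∃ y ∈ frontier Ω, dist z y < r := by
    intro z hz
    have hzM : z ∈ M := hM2M hz
    have hzc : z ∈ closure Ω := hMcl z hzM
    have hnP : ¬ P z := (Finset.mem_filter.mp hz).2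
    by_cases hzΩ : z ∈ Ω
    · have hlt : infDist z (frontier Ω) < r := by
        by_contra hge
        push_neg at hge
        exact hnP ⟨hzΩ, hge⟩
      exact (infDist_lt_iff hfrne).mp hlt
    · refine ⟨z, ?_, by simpa using hrpos⟩
      rw [hΩopen.frontier_eq]
      exact ⟨hzc, hzΩ⟩
  choose! ymap hymem hydist using hmove
  by_cases hK : K + 1 ≤ 2 * M1.card + M2.card
  · refine ⟨M1.card, M2.card, fun k => (M1.equivFin.symm k : _),
      fun k => (M2.equivFin.symm k : _), hK, ?_, ?_, ?_, ?_, ?_, ?_, ?_⟩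
    · intro k
      exact (Finset.mem_filter.mp (M1.equivFin.symm k).2).2
    · intro k
      exact hMcl _ (hM2M (M2.equivFin.symm k).2)
    · intro k k' hkk
      have hne : ((M1.equivFin.symm k : _) : EuclideanSpace ℝ (Fin 2)) ≠ (M1.equivFin.symm k' : _) := by
        intro hcontra
        exact hkk (M1.equivFin.symm.injective (Subtype.coe_injective hcontra))
      exact hMsep _ (hM1M (M1.equivFin.symm k).2) _ (hM1M (M1.equivFin.symm k').2) hne
    · intro k k' hkk
      have hne : ((M2.equivFin.symm k : _) : EuclideanSpace ℝ (Fin 2)) ≠ (M2.equivFin.symm k' : _) := by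
        intro hcontra
        exact hkk (M2.equivFin.symm.injective (Subtype.coe_injective hcontra))
      exact hMsep _ (hM2M (M2.equivFin.symm k).2) _ (hM2M (M2.equivFin.symm k').2) hne
    · intro k k'
      have hne : ((M1.equivFin.symm k : _) : EuclideanSpace ℝ (Fin 2)) ≠ (M2.equivFin.symm k' : _) := by
        intro hcontra
        have h1 : P ((M1.equivFin.symm k : _) : EuclideanSpace ℝ (Fin 2)) :=
          (Finset.mem_filter.mp (M1.equivFin.symm k).2).2
        have h2 : ¬ P ((M2.equivFin.symm k' : _) : EuclideanSpace ℝ (Fin 2)) :=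
          (Finset.mem_filter.mp (M2.equivFin.symm k').2).2
        rw [hcontra] at h1
        exact h2 h1
      exact hMsep _ (hM1M (M1.equivFin.symm k).2) _ (hM2M (M2.equivFin.symm k').2) hne
    · intro k
      exact hMheavy _ (hM1M (M1.equivFin.symm k).2)
    · intro k
      exact hMheavy _ (hM2M (M2.equivFin.symm k).2)
  · exfalso
    push_neg at hK
    set y1 : Fin M1.card → EuclideanSpace ℝ (Fin 2) :=
      fun k => (M1.equivFin.symm k : _) with hy1def
    set y2 : Fin M2.card → EuclideanSpace ℝ (Fin 2) :=
      fun k => ymap ((M2.equivFin.symm k : _) : EuclideanSpace ℝ (Fin 2)) with hy2def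
    have hy1Ω : ∀ k, y1 k ∈ Ω := fun k =>
      ((Finset.mem_filter.mp (M1.equivFin.symm k).2).2).1
    have hy2fr : ∀ k, y2 k ∈ frontier Ω := fun k =>
      hymem _ (M2.equivFin.symm k).2
    have hbound := h M1.card M2.card (by omega) y1 hy1Ω y2 hy2fr
    set UH : Set (EuclideanSpace ℝ (Fin 2)) := ⋃ z ∈ H, ball z r with hUH
    have hUHmeas : MeasurableSet UH :=
      MeasurableSet.biUnion H.countable_toSet fun z _ => measurableSet_ball
    set UC : Set (EuclideanSpace ℝ (Fin 2)) :=
      (⋃ k, ball (y1 k) ε) ∪ ⋃ k, ball (y2 k) ε with hUC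
    have hUCmeas : MeasurableSet UC :=
      ((MeasurableSet.iUnion fun k => measurableSet_ball).union
        (MeasurableSet.iUnion fun k => measurableSet_ball))
    -- covering: heavy union inside the ε-ball union
    have hcov2 : Ω ∩ UH ⊆ Ω ∩ UC := by
      rintro x ⟨hxΩ, hxUH⟩
      refine ⟨hxΩ, ?_⟩
      obtain ⟨z, hzH, hxz⟩ := Set.mem_iUnion₂.mp hxUH
      obtain ⟨s, hsM, hzs⟩ := hMnear z hzH
      rw [mem_ball] at hxz
      by_cases hsP : P s
      · left
        have hs1 : s ∈ M1 := Finset.mem_filter.mpr ⟨hsM, hsP⟩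
        refine Set.mem_iUnion.mpr ⟨M1.equivFin ⟨s, hs1⟩, ?_⟩
        have hval : y1 (M1.equivFin ⟨s, hs1⟩) = s := by
          rw [hy1def]
          simp [Equiv.symm_apply_apply]
        rw [mem_ball, hval]
        calc dist x s ≤ dist x z + dist z s := dist_triangle _ _ _
          _ < r + 4 * r := by linarith
          _ < ε := by rw [hr]; linarith
      · right
        have hs2 : s ∈ M2 := Finset.mem_filter.mpr ⟨hsM, hsP⟩
        refine Set.mem_iUnion.mpr ⟨M2.equivFin ⟨s, hs2⟩, ?_⟩
        have hval : y2 (M2.equivFin ⟨s, hs2⟩) = ymap s := by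
          rw [hy2def]
          simp [Equiv.symm_apply_apply]
        rw [mem_ball, hval]
        have hsy : dist s (ymap s) < r := hydist s hs2
        calc dist x (ymap s) ≤ dist x z + dist z s + dist s (ymap s) :=
              dist_triangle4 _ _ _ _
          _ < r + 4 * r + r := by linarith
          _ = ε := by rw [hr]; ring
    -- mass lower bound on heavy union
    have hintUH : IntegrableOn f (Ω ∩ UH) volume := hint.mono_set Set.inter_subset_left
    have hintdiff : IntegrableOn f (Ω \ UH) volume := hint.mono_set Set.diff_subset
    have hsplit : (1 : ℝ) = (∫ y in Ω ∩ UH, f y) + ∫ y in Ω \ UH, f y := by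
      rw [← hf1]
      rw [← setIntegral_union (Set.disjoint_left.mpr fun x hx1 hx2 => hx2.2 hx1.2)
        (hΩopen.measurableSet.diff hUHmeas) hintUH hintdiff, Set.inter_union_diff]
    have hdiffsub : Ω \ UH ⊆ Ω ∩ ⋃ z ∈ (T \ H : Finset _), ball z r := by
      rintro x ⟨hxΩ, hxUH⟩
      refine ⟨hxΩ, ?_⟩
      obtain ⟨z, hzT, hb⟩ := Set.mem_iUnion₂.mp (hTcov (subset_closure hxΩ))
      by_cases hzH : z ∈ H
      · exact absurd (Set.mem_iUnion₂.mpr ⟨z, hzH, hb⟩) hxUH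
      · exact Set.mem_iUnion₂.mpr ⟨z, Finset.mem_sdiff.mpr ⟨hzT, hzH⟩, hb⟩
    have hlight1 : (∫ y in Ω \ UH, f y) ≤
        ∫ y in Ω ∩ ⋃ z ∈ (T \ H : Finset _), ball z r, f y := by
      refine setIntegral_mono_set (hint.mono_set Set.inter_subset_left)
        (ae_restrict_of_forall_mem
          (hΩopen.measurableSet.inter
            (MeasurableSet.biUnion (T \ H).countable_toSet fun z _ => measurableSet_ball))
          fun x hx => hf0 x hx.1)
        hdiffsub.eventuallyLE
    have hlight2 : (∫ y in Ω ∩ ⋃ z ∈ (T \ H : Finset _), ball z r, f y) ≤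
        ∑ z ∈ (T \ H : Finset _), ∫ y in Ω ∩ ball z r, f y :=
      integral_biUnion_le' hΩopen.measurableSet hint hf0 _ _
    have hlight3 : (∑ z ∈ (T \ H : Finset _), ∫ y in Ω ∩ ball z r, f y) ≤
        ((T \ H).card : ℝ) * εt := by
      have := Finset.sum_le_card_nsmul (T \ H) (fun z => ∫ y in Ω ∩ ball z r, f y) εt
        (fun z hz => by
          have hzH : z ∉ H := (Finset.mem_sdiff.mp hz).2
          have hzT : z ∈ T := (Finset.mem_sdiff.mp hz).1
          by_contra hge
          push_neg at hge
          exact hzH (Finset.mem_filter.mpr ⟨hzT, le_of_lt hge⟩))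
      simpa [nsmul_eq_mul] using this
    have hcard : ((T \ H).card : ℝ) ≤ (N : ℝ) := by
      exact_mod_cast Finset.card_le_card (Finset.sdiff_subset)
    have hNεt : (N : ℝ) * εt ≤ ε / 2 := by
      have hN0 : (0:ℝ) ≤ (N:ℝ) := Nat.cast_nonneg N
      rw [hεt]
      calc (N:ℝ) * (ε / (2 * ((N:ℝ) + 1))) = ε * ((N:ℝ) / (2 * ((N:ℝ) + 1))) := by ring
        _ ≤ ε * (1 / 2) := by
            refine mul_le_mul_of_nonneg_left ?_ (le_of_lt hε)
            rw [div_le_div_iff₀ (by linarith : (0:ℝ) < 2 * ((N:ℝ) + 1)) (by norm_num : (0:ℝ) < 2)]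
            linarith
        _ = ε / 2 := by ring
    have hheavy : 1 - ε / 2 ≤ ∫ y in Ω ∩ UH, f y := by
      have h1 : (∫ y in Ω \ UH, f y) ≤ ε / 2 := by
        have := mul_le_mul_of_nonneg_right hcard (le_of_lt hεtpos)
        linarith
      linarith
    have hmono : (∫ y in Ω ∩ UH, f y) ≤ ∫ y in Ω ∩ UC, f y :=
      setIntegral_mono_set (hint.mono_set Set.inter_subset_left)
        (ae_restrict_of_forall_mem (hΩopen.measurableSet.inter hUCmeas)
          fun x hx => hf0 x hx.1)
        hcov2.eventuallyLE
    linarith
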